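/- The family ℰ = {V(p)} ∪ {V(p) \ V(q)} of cylinder and relative cylinder sets separates points of ∂X: if x ≠ y in ∂X, there exist disjoint A, B ∈ ℰ with x ∈ A and y ∈ B. -/

import Mathlib

namespace ZnTree

abbrev Letter (n : ℕ) := Bool × (Fin n → ℤ)
abbrev Word (n : ℕ) := List (Letter n)

/-- `a` is positive in the lexicographic order on `ℤⁿ`. -/
def PosL (n : ℕ) (a : Fin n → ℤ) : Prop := toLex (0 : Fin n → ℤ) < toLex a

/-- The word alternates between the two copies of `Λ⁺`. -/
def Alt (n : ℕ) (w : Word n) : Prop := List.Chain' (fun x y => x.1 ≠ y.1) w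

/-- `w` is an element of `X = Λ⁺ * Λ⁺`. -/
def IsX (n : ℕ) (w : Word n) : Prop := Alt n w ∧ ∀ x ∈ w, PosL n x.2

/-- Concatenation in `X`, merging adjacent letters from the same copy. -/
def wmul (n : ℕ) (p q : Word n) : Word n :=
  match p.getLast?, q with
  | some a, b :: q' =>
      if a.1 = b.1 then p.dropLast ++ (a.1, a.2 + b.2) :: q' else p ++ q
  | _, _ => p ++ q

/-- The length function `l : X → ℤⁿ`. -/
def wlen (n : ℕ) (p : Word n) : Fin n → ℤ := (p.map Prod.snd).sum

/-- `b ∈ ∂Λ⁺`. -/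
def IsBLet (n : ℕ) (b : Fin n → ℕ∞) : Prop :=
  (∀ i j : Fin n, i ≤ j → b i = ⊤ → b j = ⊤) ∧ ∀ i : Fin n, (i : ℕ) = n - 1 → b i = ⊤

/-- Points of the boundary `∂X`: finite alternating words ending with a letter of `∂Λ⁺`,
or infinite alternating words. -/
inductive Bdry (n : ℕ) where
  | fin (w : Word n) (b : Bool × (Fin n → ℕ∞)) : Bdry n
  | inf (f : ℕ → Letter n) : Bdry n

/-- Well-formedness of boundary points. -/
def IsBdry (n : ℕ) : Bdry n → Prop
  | .fin w b => IsX n w ∧ IsBLet n b.2 ∧ ∀ a ∈ w.getLast?, a.1 ≠ b.1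
  | .inf f => (∀ i, (f i).1 ≠ (f (i + 1)).1) ∧ ∀ i, PosL n (f i).2

/-- Componentwise sum `a + b` for `a ∈ Λ⁺`, `b ∈ ∂Λ⁺`. -/
def addB (n : ℕ) (a : Fin n → ℤ) (b : Fin n → ℕ∞) : Fin n → ℕ∞ :=
  fun i => (b i).map (fun (k : ℕ) => ((k : ℤ) + a i).toNat)

/-- Prepend a finite word to an infinite word. -/
def pre (n : ℕ) (w : Word n) (f : ℕ → Letter n) : ℕ → Letter n :=
  fun i => if i < w.length then w.getD i (false, 0) else f (i - w.length)

/-- Concatenation `p z` for `p ∈ X` and `z ∈ ∂X`. -/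
def bmul (n : ℕ) (p : Word n) (z : Bdry n) : Bdry n :=
  match z with
  | .inf f =>
    match p.getLast? with
    | some a =>
      if a.1 = (f 0).1 then
        .inf (pre n (p.dropLast ++ [(a.1, a.2 + (f 0).2)]) (fun i => f (i + 1)))
      else .inf (pre n p f)
    | none => .inf f
  | .fin w b =>
    match w, p.getLast? with
    | _ :: _, _ => .fin (wmul n p w) b
    | [], some a => if a.1 = b.1 then .fin p.dropLast (b.1, addB n a.2 b.2) else .fin p b
    | [], none => .fin [] b

/-- The boundary `∂X` as a type. -/
def bX (n : ℕ) := {z : Bdry n // IsBdry n z}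

/-- The cylinder set `V(p) = {px : x ∈ ∂X}`. -/
def Vs (n : ℕ) (p : Word n) : Set (bX n) := {z | ∃ x : bX n, z.1 = bmul n p x.1}

/-- The family `ℰ = {V(p)} ∪ {V(p) \ V(q)}`. -/
def E (n : ℕ) : Set (Set (bX n)) :=
  {A | ∃ p, IsX n p ∧ A = Vs n p} ∪
  {A | ∃ p q, IsX n p ∧ IsX n q ∧ A = Vs n p \ Vs n q}

/-- `∂X` as a subset of the raw type `Bdry n`. -/
def bset (n : ℕ) : Set (Bdry n) := {z | IsBdry n z}

/-- The basic groupoid set `[p,q]_A = {(px, l(p) - l(q), qx) : x ∈ A}`. -/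
def Uset (n : ℕ) (p q : Word n) (A : Set (Bdry n)) :
    Set (Bdry n × (Fin n → ℤ) × Bdry n) :=
  {g | ∃ x ∈ A, g = (bmul n p x, wlen n p - wlen n q, bmul n q x)}

/-- Setwise groupoid multiplication. -/
def gmulS (n : ℕ) (S T : Set (Bdry n × (Fin n → ℤ) × Bdry n)) :
    Set (Bdry n × (Fin n → ℤ) × Bdry n) :=
  {g | ∃ s ∈ S, ∃ t ∈ T, s.2.2 = t.1 ∧ g = (s.1, s.2.1 + t.2.1, t.2.2)}

/-- Setwise groupoid inversion. -/
def ginvS (n : ℕ) (S : Set (Bdry n × (Fin n → ℤ) × Bdry n)) :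
    Set (Bdry n × (Fin n → ℤ) × Bdry n) :=
  {g | ∃ s ∈ S, g = (s.2.2, -s.2.1, s.1)}

/-- Shift equivalence with lag `k`: `x ∼ₖ y` iff `x = pz`, `y = qz`, `k = l(p) - l(q)`. -/
def srel (n : ℕ) (k : Fin n → ℤ) (x y : Bdry n) : Prop :=
  ∃ p q z, IsX n p ∧ IsX n q ∧ IsBdry n z ∧
    k = wlen n p - wlen n q ∧ x = bmul n p z ∧ y = bmul n q z

/-- The prefix (extension) order on `X`: `p ⪯ q`. -/
def xle (n : ℕ) (p q : Word n) : Prop := ∃ r, IsX n r ∧ q = wmul n p r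



section Sep

variable {n : ℕ}

lemma isx_nil : IsX n ([] : Word n) := ⟨List.isChain_nil, by simp⟩

lemma bmul_nil (z : Bdry n) : bmul n [] z = z := by
  cases z with
  | fin w b => cases w <;> rfl
  | inf f => rfl

lemma mem_Vs_nil (x : bX n) : x ∈ Vs n [] := ⟨x, (bmul_nil x.1).symm⟩

lemma le_length_wmul (p q : Word n) : p.length ≤ (wmul n p q).length := by
  unfold wmul
  split
  · rename_i a q' heq
    split
    · have hp : p ≠ [] := by
        intro h; subst h; simp at heq
      have h1 : 1 ≤ p.length := List.length_pos_iff.mpr hp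
      simp [List.length_dropLast]
      omega
    · simp
  · simp

lemma dropLast_prefix_wmul (p q : Word n) : p.dropLast <+: wmul n p q := by
  unfold wmul
  split
  · split
    · exact List.prefix_append _ _
    · exact (List.dropLast_prefix p).trans (List.prefix_append _ _)
  · exact (List.dropLast_prefix p).trans (List.prefix_append _ _)

lemma L1 {p : Word n} {z : Bdry n} {w : Word n} {b}
    (h : bmul n p z = Bdry.fin w b) : p.dropLast <+: w := by
  unfold bmul at h
  split at h
  · split at h
    · split at h <;> exact absurd h (by simp)
    · exact absurd h (by simp)
  · split at h
    · injection h with h1 _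
      exact h1 ▸ dropLast_prefix_wmul p _
    · split at h
      · injection h with h1 _
        exact h1 ▸ List.prefix_refl _
      · injection h with h1 _
        exact h1 ▸ List.dropLast_prefix p
    · rename_i heq
      injection h with h1 _
      have hp : p = [] := List.getLast?_eq_none_iff.mp heq
      subst hp
      simp [← h1]

lemma L2 {w : Word n} {c : Bool} {a : Fin n → ℤ} {z : Bdry n} {b}
    (h : bmul n (w ++ [(c, a)]) z = Bdry.fin w b) :
    ∃ γ, z = Bdry.fin [] (c, γ) ∧ b = (c, addB n a γ) := by
  unfold bmul at h
  split at h
  · split at h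
    · split at h <;> exact absurd h (by simp)
    · exact absurd h (by simp)
  · rename_i wz bz
    split at h
    · rename_i u0 ut
      exfalso
      injection h with h1 _
      have hle := le_length_wmul (w ++ [(c, a)]) (u0 :: ut)
      rw [h1] at hle
      simp at hle
    · rename_i a' heq
      rw [List.getLast?_concat] at heq
      injection heq with heq
      subst heq
      split at h
      · rename_i hcc
        injection h with h1 h2
        refine ⟨bz.2, ?_, ?_⟩
        · exact congrArg (Bdry.fin []) (Prod.ext (by simpa using hcc.symm) rfl)
        · rw [← h2]
          exact Prod.ext (by simpa using hcc.symm) rfl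
      · exfalso
        injection h with h1 _
        apply_fun List.length at h1
        simp at h1
    · rename_i heq
      rw [List.getLast?_concat] at heq
      exact absurd heq (by simp)

lemma L3 {q : Word n} {x : Letter n} {z : Bdry n} {f : ℕ → Letter n}
    (hz : IsBdry n z) (h : bmul n (q ++ [x]) z = Bdry.inf f) :
    (f q.length).1 = x.1 ∧
      ((f q.length).2 = x.2 ∨ ∃ v, PosL n v ∧ (f q.length).2 = x.2 + v) := by
  unfold bmul at h
  split at h
  · rename_i g
    split at h
    · rename_i a' heq
      rw [List.getLast?_concat] at heq
      injection heq with heq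
      subst heq
      split at h
      · rename_i hcc
        injection h with h1
        have hf : f q.length = (x.1, x.2 + (g 0).2) := by
          rw [← h1]
          unfold pre
          rw [List.dropLast_concat]
          have hlen : q.length < (q ++ [(x.1, x.2 + (g 0).2)]).length := by simp
          rw [if_pos hlen, List.getD_eq_getElem?_getD, List.getElem?_concat_length]
          rfl
        rw [hf]
        exact ⟨rfl, Or.inr ⟨(g 0).2, hz.2 0, rfl⟩⟩
      · injection h with h1
        have hf : f q.length = x := by
          rw [← h1]
          unfold pre
          have hlen : q.length < (q ++ [x]).length := by simp
          rw [if_pos hlen, List.getD_eq_getElem?_getD, List.getElem?_concat_length]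
          rfl
        rw [hf]
        exact ⟨rfl, Or.inl rfl⟩
    · rename_i heq
      rw [List.getLast?_concat] at heq
      exact absurd heq (by simp)
  · split at h
    · exact absurd h (by simp)
    · split at h <;> exact absurd h (by simp)
    · exact absurd h (by simp)

lemma isblet_map (β : Fin n → ℕ∞) (hβ : IsBLet n β) (F : Fin n → ℕ → ℕ) :
    IsBLet n (fun i => (β i).map (F i)) := by
  constructor
  · intro i j hij htop
    simp only at htop ⊢
    have htop := ENat.map_eq_top_iff.mp htop
    rw [hβ.1 i j hij htop]
    rfl
  · intro i hi
    simp only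
    rw [hβ.2 i hi]
    rfl

lemma addB_sub (a : Fin n → ℤ) (β : Fin n → ℕ∞)
    (ha : ∀ i (k : ℕ), β i = (k : ℕ∞) → a i ≤ (k : ℤ)) :
    addB n a (fun i => (β i).map fun k : ℕ => ((k : ℤ) - a i).toNat) = β := by
  funext i
  unfold addB
  simp only
  cases hb : β i using WithTop.recTopCoe with
  | top => rfl
  | coe k =>
    have hak := ha i k (by exact_mod_cast hb)
    change WithTop.map _ (WithTop.map _ (WithTop.some k)) = WithTop.some k
    rw [WithTop.map_coe, WithTop.map_coe, WithTop.coe_inj]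
    omega

lemma M1 (w : Word n) (c : Bool) (β : Fin n → ℕ∞) (a : Fin n → ℤ)
    (hβ : IsBLet n β) (ha : ∀ i (k : ℕ), β i = (k : ℕ∞) → a i ≤ (k : ℤ)) :
    ∃ γ, IsBLet n γ ∧ bmul n (w ++ [(c, a)]) (Bdry.fin [] (c, γ)) = Bdry.fin w (c, β) := by
  refine ⟨fun i => (β i).map fun k : ℕ => ((k : ℤ) - a i).toNat,
    isblet_map β hβ _, ?_⟩
  have hs := addB_sub a β ha
  simp only [bmul, List.getLast?_concat, if_pos rfl, List.dropLast_concat]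
  simp [hs]

lemma isx_concat {w : Word n} (hw : IsX n w) {c : Bool} {a : Fin n → ℤ}
    (hl : ∀ u ∈ w.getLast?, u.1 ≠ c) (hpa : PosL n a) : IsX n (w ++ [(c, a)]) := by
  constructor
  · refine List.isChain_append.mpr ⟨hw.1, List.isChain_singleton _, ?_⟩
    intro u hu v hv
    simp at hv
    subst hv
    exact hl u hu
  · intro u hu
    rcases List.mem_append.mp hu with h | h
    · exact hw.2 u h
    · simp at h
      subst h
      exact hpa

lemma posL_of (aa : Fin n → ℤ) (i0 : Fin n) (h0 : ∀ j, j < i0 → aa j = 0)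
    (hp : 0 < aa i0) : PosL n aa := by
  unfold PosL
  exact ⟨i0, fun j hj => (h0 j hj).symm, by simpa using hp⟩

lemma posL_update (i0 : Fin n) (v : ℤ) (hv : 0 < v) :
    PosL n (Function.update (0 : Fin n → ℤ) i0 v) := by
  refine posL_of _ i0 (fun j hj => ?_) (by simp [hv])
  rw [Function.update_apply, if_neg (by exact fun h => absurd h (ne_of_lt hj))]
  rfl

lemma pre_ofFn (f : ℕ → Letter n) (m : ℕ) :
    pre n (List.ofFn fun i : Fin m => f i) (fun i => f (i + m)) = f := by
  funext i
  unfold pre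
  simp only [List.length_ofFn]
  split
  · rename_i h
    rw [List.getD_eq_getElem?_getD]
    simp [List.getElem?_ofFn, h]
  · rename_i h
    congr 1
    omega

lemma inf_mem (f : ℕ → Letter n) (hf : IsBdry n (Bdry.inf f)) (m : ℕ) :
    IsX n (List.ofFn fun i : Fin (m + 1) => f i) ∧
      ∃ z, IsBdry n z ∧ Bdry.inf f = bmul n (List.ofFn fun i : Fin (m + 1) => f i) z := by
  have hofn : (List.ofFn fun i : Fin (m + 1) => f i)
      = (List.ofFn fun i : Fin m => f i) ++ [f m] := by
    rw [List.ofFn_succ']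
    simp
  constructor
  · constructor
    · show List.IsChain _ _
      rw [List.isChain_iff_getElem]
      intro i hi
      simp only [List.getElem_ofFn]
      exact hf.1 _
    · intro u hu
      rw [List.mem_ofFn] at hu
      obtain ⟨i, rfl⟩ := hu
      exact hf.2 _
  · refine ⟨Bdry.inf (fun i => f (i + (m + 1))), ⟨fun i => ?_, fun i => hf.2 _⟩, ?_⟩
    · dsimp only
      rw [show i + 1 + (m + 1) = i + (m + 1) + 1 from by omega]
      exact hf.1 _
    · have hlast : (List.ofFn fun i : Fin (m + 1) => f i).getLast? = some (f m) := by
        rw [hofn]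
        exact List.getLast?_concat
      have hne : (f m).1 ≠ ((fun i => f (i + (m + 1))) 0).1 := by
        simpa using hf.1 m
      simp only [bmul, hlast]
      rw [if_neg hne, pre_ofFn]

/-- `p` covers `Y` and excludes `X`. -/
def Cov (p : Word n) (X Y : Bdry n) : Prop :=
  (∃ z, IsBdry n z ∧ Y = bmul n p z) ∧ ∀ z, IsBdry n z → bmul n p z ≠ X

lemma sep_finb (w : Word n) (bx bY : Bool × (Fin n → ℕ∞))
    (hx : IsBdry n (Bdry.fin w bx)) (hy : IsBdry n (Bdry.fin w bY))
    (hc : bx.1 = bY.1) (i0 : Fin n) (m : ℕ) (hm : bx.2 i0 = (m : ℕ∞))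
    (hlt : ∀ k : ℕ, bY.2 i0 = (k : ℕ∞) → m < k) :
    ∃ p, IsX n p ∧ Cov p (Bdry.fin w bx) (Bdry.fin w bY) := by
  set a : Fin n → ℤ := Function.update (0 : Fin n → ℤ) i0 ((m : ℤ) + 1) with ha
  have hacond : ∀ i (k : ℕ), bY.2 i = (k : ℕ∞) → a i ≤ (k : ℤ) := by
    intro i k hk
    rw [ha, Function.update_apply]
    split
    · rename_i hii
      subst hii
      have := hlt k hk
      omega
    · positivity
  refine ⟨w ++ [(bY.1, a)], isx_concat hx.1 (fun u hu => hc ▸ hx.2.2 u hu)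
    (posL_update i0 _ (by omega)), ?_, ?_⟩
  · obtain ⟨γ, hγ, heq⟩ := M1 w bY.1 bY.2 a hy.2.1 hacond
    exact ⟨Bdry.fin [] (bY.1, γ), ⟨isx_nil, hγ, by simp⟩, heq.symm⟩
  · intro z hz h
    obtain ⟨γ, hzeq, hbeq⟩ := L2 h
    have h2 : bx.2 i0 = addB n a γ i0 := by rw [hbeq]
    rw [hm] at h2
    unfold addB at h2
    have hai : a i0 = (m : ℤ) + 1 := by rw [ha]; simp
    rw [hai] at h2
    cases hgi : γ i0 using WithTop.recTopCoe with
    | top =>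
      rw [hgi] at h2
      exact ENat.coe_ne_top m h2
    | coe k =>
      rw [hgi] at h2
      change WithTop.some m = WithTop.map _ (WithTop.some k) at h2
      rw [WithTop.map_coe] at h2
      have hmk : m = ((k : ℤ) + ((m : ℤ) + 1)).toNat := WithTop.coe_inj.mp h2
      omega

lemma sep_pext (hn : 2 ≤ n) (w : Word n) (b : Bool × (Fin n → ℕ∞))
    (hb : IsBdry n (Bdry.fin w b)) :
    ∃ a : Fin n → ℤ, IsX n (w ++ [(b.1, a)]) ∧
      ∃ z, IsBdry n z ∧ Bdry.fin w b = bmul n (w ++ [(b.1, a)]) z := by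
  set i0 : Fin n := ⟨n - 1, by omega⟩ with hi0
  set a : Fin n → ℤ := Function.update (0 : Fin n → ℤ) i0 1 with ha
  have htop : b.2 i0 = ⊤ := hb.2.1.2 i0 rfl
  have hacond : ∀ i (k : ℕ), b.2 i = (k : ℕ∞) → a i ≤ (k : ℤ) := by
    intro i k hk
    rw [ha, Function.update_apply]
    split
    · rename_i hii
      subst hii
      rw [htop] at hk
      exact absurd hk (by simp)
    · positivity
  refine ⟨a, isx_concat hb.1 hb.2.2 (posL_update i0 _ (by omega)), ?_⟩
  obtain ⟨γ, hγ, heq⟩ := M1 w b.1 b.2 a hb.2.1 hacond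
  exact ⟨Bdry.fin [] (b.1, γ), ⟨isx_nil, hγ, by simp⟩, heq.symm⟩

lemma sep_sign (hn : 2 ≤ n) (w : Word n) (bx bY : Bool × (Fin n → ℕ∞))
    (hy : IsBdry n (Bdry.fin w bY)) (hc : bx.1 ≠ bY.1) :
    ∃ p, IsX n p ∧ Cov p (Bdry.fin w bx) (Bdry.fin w bY) := by
  obtain ⟨a, hisx, hz⟩ := sep_pext hn w bY hy
  refine ⟨w ++ [(bY.1, a)], hisx, hz, ?_⟩
  intro z hzB h
  obtain ⟨γ, hzeq, hbeq⟩ := L2 h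
  exact hc (by rw [hbeq])

lemma sep_pref (hn : 2 ≤ n) (w w' : Word n) (bx bY : Bool × (Fin n → ℕ∞))
    (hy : IsBdry n (Bdry.fin w' bY)) (hnp : ¬ w' <+: w) :
    ∃ p, IsX n p ∧ Cov p (Bdry.fin w bx) (Bdry.fin w' bY) := by
  obtain ⟨a, hisx, hz⟩ := sep_pext hn w' bY hy
  refine ⟨w' ++ [(bY.1, a)], hisx, hz, ?_⟩
  intro z hzB h
  have := L1 h
  rw [List.dropLast_concat] at this
  exact hnp this

lemma sep_fininf (w : Word n) (bx : Bool × (Fin n → ℕ∞)) (g : ℕ → Letter n)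
    (hg : IsBdry n (Bdry.inf g)) :
    ∃ p, IsX n p ∧ Cov p (Bdry.fin w bx) (Bdry.inf g) := by
  obtain ⟨hisx, z, hzB, hzeq⟩ := inf_mem g hg (w.length + 1)
  refine ⟨_, hisx, ⟨z, hzB, hzeq⟩, ?_⟩
  intro z' hz' h
  have hpre := L1 h
  have hl := hpre.length_le
  simp [List.length_dropLast, List.length_ofFn] at hl

lemma sep_infinf (f g : ℕ → Letter n)
    (hf : IsBdry n (Bdry.inf f)) (hg : IsBdry n (Bdry.inf g)) (m : ℕ)
    (hne : f m ≠ g m)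
    (hcond : ∀ v, PosL n v → f m ≠ ((g m).1, (g m).2 + v)) :
    ∃ p, IsX n p ∧ Cov p (Bdry.inf f) (Bdry.inf g) := by
  obtain ⟨hisx, z, hzB, hzeq⟩ := inf_mem g hg m
  refine ⟨_, hisx, ⟨z, hzB, hzeq⟩, ?_⟩
  intro z' hz' h
  have hofn : (List.ofFn fun i : Fin (m + 1) => g i)
      = (List.ofFn fun i : Fin m => g i) ++ [g m] := by
    rw [List.ofFn_succ']
    simp
  rw [hofn] at h
  obtain ⟨h1, h2⟩ := L3 hz' h
  rw [List.length_ofFn] at h1 h2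
  rcases h2 with h2 | ⟨v, hv, h2⟩
  · exact hne (Prod.ext h1 h2)
  · exact hcond v hv (Prod.ext h1 h2)

lemma posL_elim {a : Fin n → ℤ} (h : PosL n a) :
    ∃ i, (∀ j, j < i → a j = 0) ∧ 0 < a i := by
  obtain ⟨i, h0, hi⟩ := (h : Pi.Lex (· < ·) (@fun _ => (· < ·)) (0 : Fin n → ℤ) a)
  exact ⟨i, fun j hj => (h0 j hj).symm, by simpa using hi⟩

lemma posL_neg (v : Fin n → ℤ) (h : PosL n v) : ¬ PosL n (-v) := by
  intro h'
  obtain ⟨i, h0, hi⟩ := posL_elim h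
  obtain ⟨i', h0', hi'⟩ := posL_elim h'
  simp only [Pi.neg_apply] at h0' hi'
  rcases lt_trichotomy i i' with hc | hc | hc
  · have := h0' i hc
    omega
  · subst hc
    omega
  · have := h0 i' hc
    omega

lemma posL_sub_trichotomy (u v : Fin n → ℤ) (h : u ≠ v) :
    PosL n (v - u) ∨ PosL n (u - v) := by
  have hne : {i | u i ≠ v i}.Nonempty := Function.ne_iff.mp h
  obtain ⟨i, hiS, hmin⟩ :=
    (IsWellFounded.wf (r := ((· < ·) : Fin n → Fin n → Prop))).has_min _ hne
  have hagree : ∀ j, j < i → u j = v j := fun j hj =>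
    not_not.mp (fun hne' => hmin j hne' hj)
  rcases lt_or_gt_of_ne (hiS : u i ≠ v i) with hlt | hgt
  · left
    refine posL_of _ i (fun j hj => ?_) ?_
    · simp [hagree j hj]
    · simp
      omega
  · right
    refine posL_of _ i (fun j hj => ?_) ?_
    · simp [hagree j hj]
    · simp
      omega

lemma hcond_of_pos {u v : Letter n} (h : PosL n (v.2 - u.2)) :
    ∀ w', PosL n w' → u ≠ (v.1, v.2 + w') := by
  intro w' hw' heq
  have h2 : u.2 = v.2 + w' := congrArg Prod.snd heq
  have h3 : v.2 - u.2 = -w' := by rw [h2]; ring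
  rw [h3] at h
  exact posL_neg w' hw' h

lemma sep_raw (hn : 2 ≤ n) (X Y : Bdry n) (hX : IsBdry n X) (hY : IsBdry n Y)
    (hXY : X ≠ Y) :
    ∃ p, IsX n p ∧ (Cov p X Y ∨ Cov p Y X) := by
  cases X with
  | inf f =>
    cases Y with
    | fin w b =>
      obtain ⟨p, hp, hc⟩ := sep_fininf w b f hX
      exact ⟨p, hp, Or.inr hc⟩
    | inf g =>
      have hfg : f ≠ g := fun h => hXY (by rw [h])
      obtain ⟨m, hm⟩ := Function.ne_iff.mp hfg
      by_cases hsign : (f m).1 = (g m).1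
      · have hval : (f m).2 ≠ (g m).2 := by
          intro h2
          exact hm (Prod.ext hsign h2)
        rcases posL_sub_trichotomy _ _ hval with hpos | hpos
        · obtain ⟨p, hp, hc⟩ := sep_infinf f g hX hY m hm (hcond_of_pos hpos)
          exact ⟨p, hp, Or.inl hc⟩
        · obtain ⟨p, hp, hc⟩ := sep_infinf g f hY hX m hm.symm (hcond_of_pos hpos)
          exact ⟨p, hp, Or.inr hc⟩
      · obtain ⟨p, hp, hc⟩ := sep_infinf f g hX hY m hm
          (fun v hv heq => hsign (by rw [heq]))
        exact ⟨p, hp, Or.inl hc⟩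
  | fin w b =>
    cases Y with
    | inf g =>
      obtain ⟨p, hp, hc⟩ := sep_fininf w b g hY
      exact ⟨p, hp, Or.inl hc⟩
    | fin w' b' =>
      by_cases hww : w = w'
      · subst hww
        by_cases hbb : b.1 = b'.1
        · have hb2 : b.2 ≠ b'.2 := by
            intro h2
            exact hXY (by rw [Prod.ext hbb h2])
          obtain ⟨i0, hi0⟩ := Function.ne_iff.mp hb2
          cases hbx : b.2 i0 using WithTop.recTopCoe with
          | top =>
            cases hby : b'.2 i0 using WithTop.recTopCoe with
            | top => exact absurd (hbx.trans hby.symm) hi0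
            | coe k =>
              obtain ⟨p, hp, hc⟩ := sep_finb w b' b hY hX hbb.symm i0 k hby
                (by
                  intro k2 hk2
                  rw [hbx] at hk2
                  exact absurd hk2.symm (ENat.coe_ne_top k2))
              exact ⟨p, hp, Or.inr hc⟩
          | coe mk =>
            cases hby : b'.2 i0 using WithTop.recTopCoe with
            | top =>
              obtain ⟨p, hp, hc⟩ := sep_finb w b b' hX hY hbb i0 mk hbx
                (by
                  intro k2 hk2
                  rw [hby] at hk2
                  exact absurd hk2.symm (ENat.coe_ne_top k2))
              exact ⟨p, hp, Or.inl hc⟩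
            | coe k =>
              have hmk : mk ≠ k := by
                intro he
                apply hi0
                rw [hbx, hby, he]
              rcases lt_or_gt_of_ne hmk with hlt | hgt
              · obtain ⟨p, hp, hc⟩ := sep_finb w b b' hX hY hbb i0 mk hbx
                  (by
                    intro k2 hk2
                    rw [hby] at hk2
                    have : k = k2 := WithTop.coe_inj.mp hk2
                    omega)
                exact ⟨p, hp, Or.inl hc⟩
              · obtain ⟨p, hp, hc⟩ := sep_finb w b' b hY hX hbb.symm i0 k hby
                  (by
                    intro k2 hk2
                    rw [hbx] at hk2
                    have : mk = k2 := WithTop.coe_inj.mp hk2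
                    omega)
                exact ⟨p, hp, Or.inr hc⟩
        · obtain ⟨p, hp, hc⟩ := sep_sign hn w b b' hY hbb
          exact ⟨p, hp, Or.inl hc⟩
      · by_cases hpre : w' <+: w
        · have hnp : ¬ w <+: w' := by
            intro h
            exact hww (h.eq_of_length (le_antisymm h.length_le hpre.length_le))
          obtain ⟨p, hp, hc⟩ := sep_pref hn w' w b' b hX hnp
          exact ⟨p, hp, Or.inr hc⟩
        · obtain ⟨p, hp, hc⟩ := sep_pref hn w w' b b' hY hpre
          exact ⟨p, hp, Or.inl hc⟩

end Sep

/-- The family `ℰ = {V(p)} ∪ {V(p) \\ V(q)}` separates points of `∂X`: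
if `x ≠ y` in `∂X` there are disjoint `A, B ∈ ℰ` with `x ∈ A`, `y ∈ B`. -/
theorem E_separates_points (n : ℕ) (hn : 2 ≤ n) (x y : bX n) (hxy : x ≠ y) :
    ∃ A ∈ E n, ∃ B ∈ E n, x ∈ A ∧ y ∈ B ∧ A ∩ B = ∅ := by
  have hxy1 : x.1 ≠ y.1 := fun h => hxy (Subtype.ext h)
  obtain ⟨p, hp, hcov⟩ := sep_raw hn x.1 y.1 x.2 y.2 hxy1
  have hVp : Vs n p ∈ E n := Set.mem_union_left _ ⟨p, hp, rfl⟩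
  have hVd : Vs n [] \ Vs n p ∈ E n := Set.mem_union_right _ ⟨[], p, isx_nil, hp, rfl⟩
  rcases hcov with hc | hc
  · refine ⟨Vs n [] \ Vs n p, hVd, Vs n p, hVp, ⟨mem_Vs_nil x, ?_⟩, ?_, ?_⟩
    · intro hx
      obtain ⟨z, hz⟩ := hx
      exact hc.2 z.1 z.2 hz.symm
    · obtain ⟨z, hzB, hzeq⟩ := hc.1
      exact ⟨⟨z, hzB⟩, hzeq⟩
    · ext u
      simp only [Set.mem_inter_iff, Set.mem_diff, Set.mem_empty_iff_false, iff_false]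
      tauto
  · refine ⟨Vs n p, hVp, Vs n [] \ Vs n p, hVd, ?_, ⟨mem_Vs_nil y, ?_⟩, ?_⟩
    · obtain ⟨z, hzB, hzeq⟩ := hc.1
      exact ⟨⟨z, hzB⟩, hzeq⟩
    · intro hy2
      obtain ⟨z, hz⟩ := hy2
      exact hc.2 z.1 z.2 hz.symm
    · ext u
      simp only [Set.mem_inter_iff, Set.mem_diff, Set.mem_empty_iff_false, iff_false]
      tauto

end ZnTree
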